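/- Let N and N_c be positive integers with N dividing N_c, and let T̃ ∈ ℂ^{N_c×N} be the piecewise-constant interpolation matrix with entries T̃_{n,i} = √(N/N_c) if ⌊nN/N_c⌋ = i and 0 otherwise; denote its columns by t̃_0, …, t̃_{N−1}. Then: (i) T̃^H T̃ = I_N; (ii) for every diagonal matrix D ∈ ℂ^{N_c×N_c} and all i ≠ j, t̃_i^H D t̃_j = 0; and (iii) for every l = 1, …, N_c−1, Σ_{i=0}^{N−1} t̃_i^H D_l t̃_i = 0, where D_l ∈ ℂ^{N_c×N_c} is the diagonal matrix with diagonal entries (D_l)_{n,n} = exp(2πi n l/N_c). (The piecewise constant interpolator is a phase noise geometry preserving transformation.) -/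

import Mathlib

open Matrix

/-- The piecewise-constant interpolation matrix is a phase noise geometry preserving
transformation: (i) its columns are orthonormal, (ii) distinct columns are orthogonal
with respect to any diagonal weighting, and (iii) the diagonal quadratic forms with the
Fourier diagonal matrices `D_l` sum to zero over the columns, for `l = 1, …, N_c - 1`. -/
theorem stmt7 (N Nc : ℕ) (hN : 0 < N) (hNc : 0 < Nc) (hdvd : N ∣ Nc)
    (T : Matrix (Fin Nc) (Fin N) ℂ)
    (hT : ∀ (n : Fin Nc) (i : Fin N),
      T n i = if (n : ℕ) * N / Nc = (i : ℕ)
        then ((Real.sqrt ((N : ℝ) / (Nc : ℝ)) : ℝ) : ℂ) else 0) :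
    Tᴴ * T = 1 ∧
      (∀ D : Matrix (Fin Nc) (Fin Nc) ℂ, D.IsDiag → ∀ i j : Fin N, i ≠ j →
        star (fun n => T n i) ⬝ᵥ (D *ᵥ fun n => T n j) = 0) ∧
      (∀ l : ℕ, 1 ≤ l → l ≤ Nc - 1 →
        ∑ i : Fin N, star (fun n => T n i) ⬝ᵥ
          ((Matrix.diagonal fun n : Fin Nc =>
            Complex.exp (2 * (Real.pi : ℂ) * Complex.I * (n : ℕ) * (l : ℕ) / Nc)) *ᵥ
              fun n => T n i) = 0) := by
  obtain ⟨M, hM⟩ := hdvd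
  have hM0 : 0 < M := by
    rcases Nat.eq_zero_or_pos M with h | h
    · subst h; simp at hM; omega
    · exact h
  have hdiv : ∀ n : ℕ, n * N / Nc = n / M := by
    intro n
    rw [hM, Nat.mul_comm n N, Nat.mul_div_mul_left _ _ hN]
  set c : ℂ := (((N : ℝ) / (Nc : ℝ) : ℝ) : ℂ) with hc
  have hNcR : (Nc : ℝ) = (N : ℝ) * (M : ℝ) := by exact_mod_cast congrArg (Nat.cast (R := ℝ)) hM
  have hsqrt : ((Real.sqrt ((N : ℝ) / (Nc : ℝ)) : ℝ) : ℂ) *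
      ((Real.sqrt ((N : ℝ) / (Nc : ℝ)) : ℝ) : ℂ) = c := by
    rw [hc, ← Complex.ofReal_mul, Real.mul_self_sqrt (by positivity)]
  have hterm : ∀ (n : Fin Nc) (i j : Fin N), star (T n i) * T n j =
      if ((n : ℕ) / M = (i : ℕ) ∧ (n : ℕ) / M = (j : ℕ)) then c else 0 := by
    intro n i j
    rw [hT, hT, hdiv]
    by_cases h1 : (n : ℕ) / M = (i : ℕ) <;> by_cases h2 : (n : ℕ) / M = (j : ℕ)
    · rw [if_pos h1, if_pos h2, if_pos ⟨h1, h2⟩, Complex.star_def, Complex.conj_ofReal, hsqrt]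
    · rw [if_pos h1, if_neg h2, if_neg (by tauto), mul_zero]
    · rw [if_neg h1, if_pos h2, if_neg (by tauto), star_zero, zero_mul]
    · rw [if_neg h1, if_neg h2, if_neg (by tauto), mul_zero]
  -- the reindexing equivalence
  let e : Fin N × Fin M ≃ Fin Nc := finProdFinEquiv.trans (finCongr hM.symm)
  have he : ∀ p : Fin N × Fin M, ((e p : Fin Nc) : ℕ) = (p.2 : ℕ) + M * (p.1 : ℕ) := by
    intro p; simp [e, finCongr_apply]
  have hdivval : ∀ p : Fin N × Fin M, ((e p : Fin Nc) : ℕ) / M = (p.1 : ℕ) := by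
    intro p
    rw [he p, Nat.add_mul_div_left _ _ hM0, Nat.div_eq_of_lt p.2.2, Nat.zero_add]
  have hcount : ∀ i : Fin N,
      (∑ n : Fin Nc, if (n : ℕ) / M = (i : ℕ) then c else 0) = (M : ℂ) * c := by
    intro i
    rw [← Equiv.sum_comp e, Fintype.sum_prod_type]
    have : ∀ i' : Fin N, ∀ r : Fin M,
        (if ((e (i', r) : Fin Nc) : ℕ) / M = (i : ℕ) then c else 0)
          = if i' = i then c else 0 := by
      intro i' r
      rw [hdivval (i', r)]
      simp [Fin.val_eq_val]
    simp only [this]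
    simp [Finset.sum_ite_eq', mul_comm]
  have hMc : (M : ℂ) * c = 1 := by
    have hNne : (N : ℂ) ≠ 0 := Nat.cast_ne_zero.mpr hN.ne'
    have hMne : (M : ℂ) ≠ 0 := Nat.cast_ne_zero.mpr hM0.ne'
    have hNcc : ((Nc : ℝ) : ℂ) = (N : ℂ) * (M : ℂ) := by push_cast [hM]; ring
    rw [hc, Complex.ofReal_div, hNcc]
    push_cast
    field_simp
  refine ⟨?_, ?_, ?_⟩
  · -- part (i)
    ext i j
    rw [Matrix.mul_apply, Matrix.one_apply]
    simp only [Matrix.conjTranspose_apply]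
    by_cases hij : i = j
    · subst hij
      simp only [if_pos rfl]
      calc (∑ n : Fin Nc, star (T n i) * T n i)
          = ∑ n : Fin Nc, if (n : ℕ) / M = (i : ℕ) then c else 0 := by
            refine Finset.sum_congr rfl fun n _ => ?_
            rw [hterm n i i]; simp
        _ = 1 := by rw [hcount i, hMc]
    · rw [if_neg hij]
      refine Finset.sum_eq_zero fun n _ => ?_
      rw [hterm n i j, if_neg]
      rintro ⟨h1, h2⟩
      exact hij (Fin.ext (h1.symm.trans h2))
  · -- part (ii)
    intro D hD i j hij
    simp only [dotProduct, Matrix.mulVec, dotProduct, Pi.star_apply]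
    refine Finset.sum_eq_zero fun n _ => ?_
    by_cases h1 : (n : ℕ) * N / Nc = (i : ℕ)
    · have : (∑ m : Fin Nc, D n m * T m j) = 0 := by
        refine Finset.sum_eq_zero fun m _ => ?_
        by_cases hnm : n = m
        · subst hnm
          rw [hT, if_neg, mul_zero]
          intro h2
          exact hij (Fin.ext (h1.symm.trans h2))
        · rw [hD hnm, zero_mul]
      rw [this, mul_zero]
    · rw [hT, if_neg h1]
      simp
  · -- part (iii)
    intro l hl1 hl2
    simp only [dotProduct, Pi.star_apply, Matrix.mulVec_diagonal]
    rw [Finset.sum_comm]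
    set d : Fin Nc → ℂ :=
      fun n : Fin Nc => Complex.exp (2 * (Real.pi : ℂ) * Complex.I * (n : ℕ) * (l : ℕ) / Nc)
      with hd
    have hinner : ∀ n : Fin Nc,
        (∑ i : Fin N, star (T n i) * (d n * T n i)) = c * d n := by
      intro n
      have hnM : (n : ℕ) / M < N := by
        apply Nat.div_lt_of_lt_mul
        rw [Nat.mul_comm, ← hM]
        exact n.2
      calc (∑ i : Fin N, star (T n i) * (d n * T n i))
          = ∑ i : Fin N, (if i = (⟨(n : ℕ) / M, hnM⟩ : Fin N) then c * d n else 0) := by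
            refine Finset.sum_congr rfl fun i _ => ?_
            have hcond : ((n : ℕ) / M = (i : ℕ)) = (i = (⟨(n : ℕ) / M, hnM⟩ : Fin N)) := by
              simp [Fin.ext_iff, eq_comm]
            rw [mul_left_comm, hterm n i i]
            simp only [and_self, hcond]
            split_ifs with h <;> ring
        _ = c * d n := by rw [Finset.sum_ite_eq']; simp
    refine (Finset.sum_congr rfl fun n _ => hinner n).trans ?_
    rw [← Finset.mul_sum]
    have hroot : (∑ n : Fin Nc, d n) = 0 := by
      have hNcC : (Nc : ℂ) ≠ 0 := Nat.cast_ne_zero.mpr hNc.ne'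
      set ζ : ℂ := Complex.exp (2 * (Real.pi : ℂ) * Complex.I * (l : ℕ) / Nc) with hζ
      have hpow : ∀ n : ℕ, ζ ^ n = Complex.exp (2 * (Real.pi : ℂ) * Complex.I * n * (l : ℕ) / Nc) := by
        intro n
        rw [hζ, ← Complex.exp_nat_mul]
        congr 1
        ring
      have hζne : ζ ≠ 1 := by
        rw [hζ]
        intro h
        rw [Complex.exp_eq_one_iff] at h
        obtain ⟨k, hk⟩ := h
        have h2pI : (2 * (Real.pi : ℂ) * Complex.I) ≠ 0 := by
          simp [Real.pi_ne_zero, Complex.I_ne_zero]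
        have h1 : ((l : ℂ) / Nc) * (2 * (Real.pi : ℂ) * Complex.I)
            = (k : ℂ) * (2 * (Real.pi : ℂ) * Complex.I) := by
          rw [← hk]; ring
        have h2 : (l : ℂ) / Nc = (k : ℂ) := mul_right_cancel₀ h2pI h1
        have h3 : (l : ℂ) = (k : ℂ) * Nc := by
          rw [div_eq_iff hNcC] at h2; exact h2
        have h4 : (l : ℤ) = k * (Nc : ℤ) := by exact_mod_cast h3
        have h5 : (Nc : ℤ) ∣ (l : ℤ) := ⟨k, by rw [h4]; ring⟩
        have h6 : Nc ∣ l := Int.natCast_dvd_natCast.mp h5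
        have := Nat.le_of_dvd (by omega) h6
        omega
      have hζNc : ζ ^ Nc = 1 := by
        rw [hpow Nc]
        have : 2 * (Real.pi : ℂ) * Complex.I * Nc * (l : ℕ) / Nc = (l : ℕ) * (2 * (Real.pi : ℂ) * Complex.I) := by
          field_simp
        rw [this]
        exact_mod_cast Complex.exp_int_mul_two_pi_mul_I (l : ℤ)
      calc (∑ n : Fin Nc, d n) = ∑ n : Fin Nc, ζ ^ (n : ℕ) := by
            refine Finset.sum_congr rfl fun n _ => ?_
            rw [hpow]
        _ = ∑ n ∈ Finset.range Nc, ζ ^ n := Fin.sum_univ_eq_sum_range _ _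
        _ = (ζ ^ Nc - 1) / (ζ - 1) := geom_sum_eq hζne Nc
        _ = 0 := by rw [hζNc]; simp
    rw [hroot, mul_zero]
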